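/- Let S be a regular semigroup, a = βα ∈ S with α, β ∈ S¹, and suppose there exist inverses α* of α and β* of β in S¹ such that β*βαα* is a mididentity in S. If ∗: M × S_a → M is a faithful representation of S_a, and α is left cancellable and β is right cancellable, then the map m · s = m ∗ (α* s β*) defines a representation of S on M such that m · (αsβ) = m ∗ s for all m ∈ M, s ∈ S. -/

import Mathlib

/-- Any product `x * ↑s * y` in `S¹ = WithOne S` with middle factor in `S` lies in `S`. -/
theorem exists_coe_eq {S : Type*} [Semigroup S] (x y : WithOne S) (s : S) :
    ∃ z : S, (z : WithOne S) = x * ↑s * y := by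
  induction x using WithOne.recOneCoe with
  | one => induction y using WithOne.recOneCoe with
    | one => exact ⟨s, by simp⟩
    | coe b => exact ⟨s * b, by simp⟩
  | coe a => induction y using WithOne.recOneCoe with
    | one => exact ⟨a * s, by simp⟩
    | coe b => exact ⟨a * s * b, by simp [mul_assoc]⟩

/-- The element `x s y ∈ S` for `x, y ∈ S¹`, `s ∈ S`. -/
noncomputable def sand3 {S : Type*} [Semigroup S] (x : WithOne S) (s : S) (y : WithOne S) : S :=
  (exists_coe_eq x y s).choose

theorem sand3_spec {S : Type*} [Semigroup S] (x : WithOne S) (s : S) (y : WithOne S) :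
    (↑(sand3 x s y) : WithOne S) = x * ↑s * y :=
  (exists_coe_eq x y s).choose_spec

/-- `sand b c s = b s c ∈ S` for `b, c ∈ S¹`, `s ∈ S`. -/
noncomputable def sand {S : Type*} [Semigroup S] (b c : WithOne S) (s : S) : S := sand3 b s c

/-- Theorem 2 (2 ⟹ 1): let `S` be regular, `a = βα`, with `α*, β*` inverses of `α, β` in `S¹`
such that `β*βαα*` is a mididentity in `S`. If `∗ : M × S_a → M` is a faithful representation
of the variant `S_a` and `α, β` are left/right cancellable, then `m · s := m ∗ (α* s β*)`
defines a representation of `S` on `M` with `m · (α s β) = m ∗ s`. -/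
theorem induced_from_variant_representation {S M : Type*} [Semigroup S]
    (hreg : ∀ x : S, ∃ y : S, x * y * x = x ∧ y * x * y = y)
    (a : S) (α β α' β' : WithOne S) (hβα : β * α = (a : WithOne S))
    (hα' : α * α' * α = α ∧ α' * α * α' = α')
    (hβ' : β * β' * β = β ∧ β' * β * β' = β')
    (hmid : ∀ s t : S, (↑s : WithOne S) * (β' * β * α * α') * ↑t = (↑(s * t) : WithOne S))
    (star : M → S → M)
    (hstar : ∀ (m : M) (s t : S), star m (s * a * t) = star (star m s) t)
    (hfaith : ∀ s t : S, (∀ m : M, star m s = star m t) → s = t)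
    (hlc : ∀ s t : S, α * ↑s = α * ↑t → s = t)
    (hrc : ∀ s t : S, ↑s * β = ↑t * β → s = t) :
    (∀ (m : M) (s t : S),
        star m (sand α' β' (s * t)) = star (star m (sand α' β' s)) (sand α' β' t)) ∧
      (∀ (m : M) (s : S), star m (sand α' β' (sand α β s)) = star m s) := by
  have key1 : ∀ s t : S, sand α' β' (s * t) = sand α' β' s * a * sand α' β' t := by
    intro s t
    have h : (↑(sand α' β' (s * t)) : WithOne S)
        = ↑(sand α' β' s * a * sand α' β' t) := by
      rw [WithOne.coe_mul, WithOne.coe_mul]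
      rw [sand, sand, sand, sand3_spec, sand3_spec, sand3_spec]
      rw [← hmid, ← hβα]
      simp only [mul_assoc]
    exact WithOne.coe_inj.mp h
  have key2 : ∀ s : S, sand α' β' (sand α β s) = s := by
    intro s
    set x := sand α' β' (sand α β s) with hx
    have hxc : (↑x : WithOne S) = α' * (α * ↑s * β) * β' := by
      rw [hx, sand, sand3_spec, sand, sand3_spec]
    have hmain : α * ↑x * β = α * ↑s * β := by
      rw [hxc]
      calc α * (α' * (α * ↑s * β) * β') * β
          = (α * α' * α) * ↑s * ((β * β' * β)) := by simp only [mul_assoc]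
        _ = α * ↑s * β := by rw [hα'.1, hβ'.1]
    induction β using WithOne.recOneCoe with
    | one =>
      apply hlc
      simpa using hmain
    | coe b =>
      apply hrc x s
      have : α * ↑(x * b) = α * ↑(s * b) := by
        simpa [WithOne.coe_mul, mul_assoc] using hmain
      have hxb := hlc _ _ this
      rw [← WithOne.coe_mul, ← WithOne.coe_mul, hxb]
  constructor
  · intro m s t
    rw [key1, hstar]
  · intro m s
    rw [key2]
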